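/- Let p ∈ ℝ⁴, and for e ∈ ℝ⁴ with ⟨e,p⟩ ≠ 0 define J_e(p)a := a − (⟨e,a⟩/⟨e,p⟩)·p for a ∈ ℝ⁴. Then for every fixed a ∈ ℝ⁴ and every direction b ∈ ℝ⁴, the derivative of the map e ↦ J_e(p)a satisfies: ⟨e,p⟩ · D_b( e ↦ J_e(p)a )(e) = −⟨b, J_e(p)a⟩ · p, at every e with ⟨e,p⟩ ≠ 0. (The identity (ep)∂_{e^λ} J_e(p)_μ{}^ν = −p_μ J_e(p)_λ{}^ν, equation (2.15), used throughout Sections 2–4.) -/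

import Mathlib

noncomputable section

/-- Minkowski bilinear form on ℝ⁴. -/
def mink (a b : Fin 4 → ℝ) : ℝ := a 0 * b 0 - a 1 * b 1 - a 2 * b 2 - a 3 * b 3

/-- The map `J_e(p): a ↦ a − (⟨e,a⟩/⟨e,p⟩)p` on ℝ⁴. -/
def Jep (p e a : Fin 4 → ℝ) : Fin 4 → ℝ :=
  fun i => a i - (mink e a / mink e p) * p i

lemma mink_add_smul (e b x : Fin 4 → ℝ) (t : ℝ) :
    mink (e + t • b) x = mink e x + t * mink b x := by
  simp [mink, Pi.add_apply, Pi.smul_apply, smul_eq_mul]; ring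

/-- Equation (2.15): `(ep)∂_{e^λ}J_e(p)_μ{}^ν = −p_μ J_e(p)_λ{}^ν`, stated as a directional
derivative in the string variable `e`. -/
theorem Jep_derivative (p : Fin 4 → ℝ) (a b : Fin 4 → ℝ) (e : Fin 4 → ℝ)
    (hep : mink e p ≠ 0) :
    mink e p • deriv (fun t : ℝ => Jep p (e + t • b) a) 0 =
      (-(mink b (Jep p e a))) • p := by
  set A := mink e a
  set B := mink b a
  set C := mink e p
  set D := mink b p
  have hg : HasDerivAt (fun t : ℝ => (A + t * B) / (C + t * D))
      ((B * (C + 0 * D) - (A + 0 * B) * D) / (C + 0 * D) ^ 2) 0 := by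
    have h1 : HasDerivAt (fun t : ℝ => A + t * B) B 0 := by
      simpa using ((hasDerivAt_id (0:ℝ)).mul_const B).const_add A
    have h2 : HasDerivAt (fun t : ℝ => C + t * D) D 0 := by
      simpa using ((hasDerivAt_id (0:ℝ)).mul_const D).const_add C
    exact h1.div h2 (by simpa using hep)
  have hf : HasDerivAt (fun t : ℝ => Jep p (e + t • b) a)
      (-(((B * (C + 0 * D) - (A + 0 * B) * D) / (C + 0 * D) ^ 2)) • p) 0 := by
    have := (hg.smul_const p).neg.const_add a
    have heq : (fun t : ℝ => a + -(((A + t * B) / (C + t * D)) • p))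
        = fun t : ℝ => Jep p (e + t • b) a := by
      funext t
      funext i
      simp [Jep, mink_add_smul, A, B, C, D, Pi.add_apply, Pi.neg_apply, smul_eq_mul]
      ring
    rw [← heq]
    simpa [neg_smul] using this
  rw [hf.deriv]
  have hJ : mink b (Jep p e a) = B - A / C * D := by
    simp [mink, Jep, A, B, C, D]; ring
  rw [hJ]
  funext i
  simp only [Pi.smul_apply, smul_eq_mul, Pi.neg_apply]
  field_simp
  linear_combination (D * A * p i - C * B * p i) * (mul_inv_cancel₀ (pow_ne_zero 2 hep))
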